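/- Let K ≥ 1, α > 0, η_K = √2(K−1)/K², f(x) = ((K−1)η_K/α)‖x‖, g*(y) = η_K‖y‖, h(x) = ‖x‖²/(2α), e a unit vector, x^0 = e/√2, u^0 = x^0/α. The DYS-gf iterates satisfy x^1 = −(√2 − K η_K) e, x^k = 0 for k = 2,...,K, u^1 = (1/α)(√2 − η_K) e, and u^k = (1/α)(K−k) η_K e for k = 2,...,K. -/

import Mathlib

noncomputable section

/-- `p` is the proximal point of `f` at `x` (minimizer over `ℝⁿ`). -/
def IsProxPt {n : ℕ} (f : EuclideanSpace ℝ (Fin n) → ℝ)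
    (x p : EuclideanSpace ℝ (Fin n)) : Prop :=
  ∀ y, f p + (1 / 2) * ‖p - x‖ ^ 2 ≤ f y + (1 / 2) * ‖y - x‖ ^ 2

lemma prox_unique {n : ℕ} {c : ℝ} (hc : 0 ≤ c) {x p q : EuclideanSpace ℝ (Fin n)}
    (hp : IsProxPt (fun v => c * ‖v‖) x p) (hq : IsProxPt (fun v => c * ‖v‖) x q) :
    p = q := by
  have h1 := hp q
  have h2 := hq p
  set m : EuclideanSpace ℝ (Fin n) := (2:ℝ)⁻¹ • (p + q) with hm
  have hm1 := hp m
  have hnm : ‖m‖ ≤ 2⁻¹ * (‖p‖ + ‖q‖) := by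
    rw [hm, norm_smul]
    have := norm_add_le p q
    simp only [norm_inv, Real.norm_ofNat]
    nlinarith
  have hpar : ‖m - x‖^2 = 2⁻¹*‖p-x‖^2 + 2⁻¹*‖q-x‖^2 - 4⁻¹*‖p-q‖^2 := by
    have hpl := parallelogram_law_with_norm ℝ (p - x) (q - x)
    have e1 : (p - x) + (q - x) = (2:ℝ) • (m - x) := by rw [hm]; module
    have e2 : (p - x) - (q - x) = p - q := by abel
    rw [e1, e2, norm_smul] at hpl
    simp only [Real.norm_ofNat] at hpl
    nlinarith
  have hz : ‖p - q‖^2 ≤ 0 := by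
    have hfm : c * ‖m‖ ≤ c * (2⁻¹ * (‖p‖ + ‖q‖)) := mul_le_mul_of_nonneg_left hnm hc
    simp only at hm1 h1 h2
    nlinarith
  have : ‖p - q‖ = 0 := by nlinarith [norm_nonneg (p - q)]
  exact sub_eq_zero.mp (norm_eq_zero.mp this)

lemma prox_smul {n : ℕ} {c t s : ℝ} {e : EuclideanSpace ℝ (Fin n)} (he : ‖e‖ = 1)
    (h1 : |t - s| ≤ c) (h2 : (t - s) * s = c * |s|) :
    IsProxPt (fun v => c * ‖v‖) (t • e) (s • e) := by
  intro y
  have hc : 0 ≤ c := le_trans (abs_nonneg _) h1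
  have hins : |(inner ℝ y e)| ≤ ‖y‖ := by
    have := abs_real_inner_le_norm y e
    rwa [he, mul_one] at this
  have key : ‖y - t • e‖^2 = ‖y - s•e‖^2 + 2*(s - t)*((inner ℝ y e) - s) + (s-t)^2 := by
    have hy : y - t•e = (y - s•e) + (s - t) • e := by module
    rw [hy, norm_add_sq_real, real_inner_smul_right, inner_sub_left,
      real_inner_smul_left, real_inner_self_eq_norm_sq, he, norm_smul, he,
      Real.norm_eq_abs]
    ring_nf
    rw [sq_abs]
    ring
  have hse : ‖s • e‖ = |s| := by rw [norm_smul, he, mul_one, Real.norm_eq_abs]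
  have hst : ‖s • e - t • e‖^2 = (s - t)^2 := by
    have hy : s•e - t•e = (s-t)•e := by module
    rw [hy, norm_smul, he, mul_one, Real.norm_eq_abs, sq_abs]
  simp only
  rw [hse, hst, key]
  have habs : |(s - t) * (inner ℝ y e)| ≤ c * ‖y‖ := by
    rw [abs_mul]
    apply mul_le_mul _ hins (abs_nonneg _) hc
    rwa [abs_sub_comm] at h1
  nlinarith [neg_abs_le ((s - t) * (inner ℝ y e)), sq_nonneg ‖y - s•e‖]

set_option maxHeartbeats 1600000 in
/-- Explicit DYS-gf iterates for `f = ((K−1)η_K/α)‖·‖`, `g* = η_K‖·‖`,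
`h = ‖·‖²/(2α)` (so `∇h(z) = z/α`), `η_K = √2(K−1)/K²`, `x⁰ = e/√2`, `u⁰ = x⁰/α`:
`x¹ = −(√2 − Kη_K)e`, `x^k = 0` for `k = 2,…,K`, `u¹ = (√2 − η_K)e/α`, and
`u^k = (K−k)η_K e/α` for `k = 2,…,K`. -/
theorem dys_gf_example_iterates (n K : ℕ) (hK : 1 ≤ K) (α : ℝ) (hα : 0 < α)
    (e : EuclideanSpace ℝ (Fin n)) (he : ‖e‖ = 1)
    (x u : ℕ → EuclideanSpace ℝ (Fin n))
    (hx0 : x 0 = (Real.sqrt 2)⁻¹ • e) (hu0 : u 0 = α⁻¹ • ((Real.sqrt 2)⁻¹ • e))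
    (hu : ∀ k, IsProxPt
      (fun v => α⁻¹ * ((Real.sqrt 2 * ((K : ℝ) - 1) / (K : ℝ) ^ 2) * ‖v‖))
      (u k + α⁻¹ • x k) (u (k + 1)))
    (hx : ∀ k, IsProxPt
      (fun v => α * ((((K : ℝ) - 1) * (Real.sqrt 2 * ((K : ℝ) - 1) / (K : ℝ) ^ 2) / α) * ‖v‖))
      ((α • u k + x k - α • u (k + 1)) -
        α • (α⁻¹ • (α • u k + x k - α • u (k + 1))) - α • u (k + 1))
      (x (k + 1))) :
    x 1 = -((Real.sqrt 2 - (K : ℝ) * (Real.sqrt 2 * ((K : ℝ) - 1) / (K : ℝ) ^ 2)) • e) ∧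
    (∀ k, 2 ≤ k → k ≤ K → x k = 0) ∧
    u 1 = (α⁻¹ * (Real.sqrt 2 - Real.sqrt 2 * ((K : ℝ) - 1) / (K : ℝ) ^ 2)) • e ∧
    (∀ k, 2 ≤ k → k ≤ K →
      u k = (α⁻¹ * (((K : ℝ) - (k : ℝ)) * (Real.sqrt 2 * ((K : ℝ) - 1) / (K : ℝ) ^ 2))) • e) := by
  set η : ℝ := Real.sqrt 2 * ((K : ℝ) - 1) / (K : ℝ) ^ 2 with hηdef
  have hα0 : α ≠ 0 := ne_of_gt hα
  have hαi : (0:ℝ) ≤ α⁻¹ := inv_nonneg.mpr hα.le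
  have hK1 : (1:ℝ) ≤ (K:ℝ) := by exact_mod_cast hK
  have hKpos : (0:ℝ) < (K:ℝ) := by linarith
  have hs2 : Real.sqrt 2 * Real.sqrt 2 = 2 := Real.mul_self_sqrt (by norm_num)
  have hs2pos : (0:ℝ) < Real.sqrt 2 := Real.sqrt_pos.mpr (by norm_num)
  have hs0 : Real.sqrt 2 ≠ 0 := ne_of_gt hs2pos
  have hη0 : 0 ≤ η := by
    rw [hηdef]
    apply div_nonneg (mul_nonneg (Real.sqrt_nonneg 2) (by linarith)) (by positivity)
  have hηs : η ≤ Real.sqrt 2 := by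
    rw [hηdef, div_le_iff₀ (by positivity)]
    nlinarith
  have hKη : (K:ℝ) * η ≤ Real.sqrt 2 := by
    rw [hηdef, mul_div_assoc', div_le_iff₀ (by positivity)]
    nlinarith
  clear_value η
  -- rewritten prox hypotheses
  have hu' : ∀ k, IsProxPt (fun v => (α⁻¹ * η) * ‖v‖) (u k + α⁻¹ • x k) (u (k + 1)) := by
    intro k y
    have h := hu k y
    simp only [mul_assoc]
    exact h
  have hid : ∀ r : ℝ, α * (((K:ℝ)-1) * η / α * r) = (((K:ℝ)-1) * η) * r := by
    intro r; field_simp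
  have hx' : ∀ k, IsProxPt (fun v => (((K:ℝ)-1)*η) * ‖v‖) ((-α) • u (k+1)) (x (k+1)) := by
    intro k y
    have h := hx k y
    have hw : (α • u k + x k - α • u (k + 1)) -
        α • (α⁻¹ • (α • u k + x k - α • u (k + 1))) - α • u (k + 1) = (-α) • u (k+1) := by
      rw [smul_inv_smul₀ hα0, sub_self, zero_sub, neg_smul]
    rw [hw] at h
    simp only at h ⊢
    rw [hid, hid] at h
    exact h
  have hcf0 : (0:ℝ) ≤ ((K:ℝ)-1)*η := mul_nonneg (by linarith) hη0
  have hcg0 : (0:ℝ) ≤ α⁻¹ * η := mul_nonneg hαi hη0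
  -- generic steps
  have ustep : ∀ k (a b s : ℝ), u k = a • e → x k = b • e →
      |a + α⁻¹*b - s| ≤ α⁻¹*η → (a + α⁻¹*b - s)*s = α⁻¹*η*|s| → u (k+1) = s • e := by
    intro k a b s hua hxb habs hsg
    have hin : u k + α⁻¹ • x k = (a + α⁻¹*b) • e := by
      rw [hua, hxb, smul_smul, ← add_smul]
    have hp := hu' k
    rw [hin] at hp
    exact prox_unique hcg0 hp (prox_smul he habs hsg)
  have xstep : ∀ k (s' s : ℝ), u (k+1) = s' • e →
      |(-α*s') - s| ≤ ((K:ℝ)-1)*η → ((-α*s') - s)*s = (((K:ℝ)-1)*η)*|s| → x (k+1) = s • e := by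
    intro k s' s hs' habs hsg
    have hp := hx' k
    rw [hs', smul_smul] at hp
    exact prox_unique hcf0 hp (prox_smul he habs hsg)
  -- step 1: u 1
  have he1 : α⁻¹*(Real.sqrt 2)⁻¹ + α⁻¹*(Real.sqrt 2)⁻¹ - α⁻¹*(Real.sqrt 2 - η) = α⁻¹*η := by
    field_simp
    linear_combination (-1 : ℝ) * hs2
  have hu1 : u 1 = (α⁻¹ * (Real.sqrt 2 - η)) • e := by
    apply ustep 0 (α⁻¹*(Real.sqrt 2)⁻¹) ((Real.sqrt 2)⁻¹) _
      (by rw [hu0, smul_smul]) hx0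
    · rw [he1, abs_of_nonneg hcg0]
    · rw [he1, abs_of_nonneg (mul_nonneg hαi (by linarith))]
  -- step 1: x 1
  have he2 : -α*(α⁻¹*(Real.sqrt 2 - η)) - (-(Real.sqrt 2 - (K:ℝ)*η)) = -(((K:ℝ)-1)*η) := by
    field_simp; ring
  have hx1 : x 1 = (-(Real.sqrt 2 - (K:ℝ)*η)) • e := by
    apply xstep 0 (α⁻¹*(Real.sqrt 2 - η)) _ hu1
    · rw [he2, abs_neg, abs_of_nonneg hcf0]
    · rw [he2, abs_neg, abs_of_nonneg (by linarith : (0:ℝ) ≤ Real.sqrt 2 - (K:ℝ)*η)]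
      ring
  -- induction for 2 ≤ k ≤ K
  have main : ∀ k, 2 ≤ k → k ≤ K → u k = (α⁻¹ * (((K:ℝ) - (k:ℝ)) * η)) • e ∧ x k = 0 := by
    intro k hk2
    induction k, hk2 using Nat.le_induction with
    | base =>
      intro h2K
      have hK2 : (2:ℝ) ≤ (K:ℝ) := by exact_mod_cast h2K
      have he3 : α⁻¹*(Real.sqrt 2 - η) + α⁻¹*(-(Real.sqrt 2 - (K:ℝ)*η))
          - α⁻¹*(((K:ℝ)-2)*η) = α⁻¹*η := by ring
      have hu2 : u 2 = (α⁻¹*(((K:ℝ)-2)*η)) • e := by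
        apply ustep 1 (α⁻¹*(Real.sqrt 2 - η)) (-(Real.sqrt 2 - (K:ℝ)*η)) _ hu1 hx1
        · rw [he3, abs_of_nonneg hcg0]
        · rw [he3, abs_of_nonneg (mul_nonneg hαi (mul_nonneg (by linarith) hη0))]
      have he4 : -α*(α⁻¹*(((K:ℝ)-2)*η)) - 0 = -(((K:ℝ)-2)*η) := by
        field_simp; ring
      have hx2 : x 2 = (0:ℝ) • e := by
        apply xstep 1 (α⁻¹*(((K:ℝ)-2)*η)) 0 hu2
        · rw [he4, abs_neg, abs_of_nonneg (mul_nonneg (by linarith) hη0)]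
          nlinarith
        · simp
      refine ⟨?_, by rw [hx2, zero_smul]⟩
      rw [hu2]
      norm_num
    | succ k hk2 IH =>
      intro hk1K
      have IH' := IH (Nat.le_of_succ_le hk1K)
      have hkK : ((k:ℝ)+1) ≤ (K:ℝ) := by exact_mod_cast hk1K
      have hk2R : (2:ℝ) ≤ (k:ℝ) := by exact_mod_cast hk2
      have he5 : α⁻¹*(((K:ℝ) - (k:ℝ))*η) + α⁻¹*0 - α⁻¹*(((K:ℝ) - ((k:ℝ)+1))*η) = α⁻¹*η := by
        ring
      have huk : u (k+1) = (α⁻¹*(((K:ℝ) - ((k:ℝ)+1))*η)) • e := by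
        apply ustep k (α⁻¹*(((K:ℝ) - (k:ℝ))*η)) 0 _ IH'.1 (by rw [IH'.2, zero_smul])
        · rw [he5, abs_of_nonneg hcg0]
        · rw [he5, abs_of_nonneg (mul_nonneg hαi (mul_nonneg (by linarith) hη0))]
      have he6 : -α*(α⁻¹*(((K:ℝ) - ((k:ℝ)+1))*η)) - 0 = -(((K:ℝ) - ((k:ℝ)+1))*η) := by
        field_simp; ring
      have hxk : x (k+1) = (0:ℝ) • e := by
        apply xstep k (α⁻¹*(((K:ℝ) - ((k:ℝ)+1))*η)) 0 huk
        · rw [he6, abs_neg, abs_of_nonneg (mul_nonneg (by linarith) hη0)]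
          nlinarith
        · simp
      refine ⟨?_, by rw [hxk, zero_smul]⟩
      rw [huk]
      congr 2
      push_cast
      ring
  refine ⟨by rw [hx1, neg_smul], fun k h1 h2 => (main k h1 h2).2, hu1,
    fun k h1 h2 => (main k h1 h2).1⟩
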